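/- Let β ≥ 0, γ ≥ 0, d ≥ 0, d_I ≥ 0 with q := γ + d + d_I − β > 0. Let S, I, N : [0,∞) → ℝ with N(t) > 0 and 0 ≤ S(t) ≤ N(t) for all t ≥ 0, let I be differentiable with I(0) ≥ 0 and I'(t) = β S(t) I(t) / N(t) − (γ + d + d_I) I(t) for all t ≥ 0. Then 0 ≤ I(t) ≤ I(0) e^{−q t} for all t ≥ 0; in particular I(t) → 0 as t → ∞. -/

import Mathlib

open Set Filter Real

/-- If `q = γ + d + d_I − β > 0` (i.e. `R₀ < 1`), then the infective population
satisfying `I' = β S I / N − (γ+d+d_I) I` with `0 ≤ S ≤ N` decays: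
`0 ≤ I(t) ≤ I(0) e^{−q t}`, and in particular `I(t) → 0` as `t → ∞`. -/
theorem stmt5 (β γ d dI : ℝ) (hβ : 0 ≤ β) (hγ : 0 ≤ γ) (hd : 0 ≤ d) (hdI : 0 ≤ dI)
    (hq : 0 < γ + d + dI - β)
    (S I N : ℝ → ℝ)
    (hN : ∀ t, 0 ≤ t → 0 < N t)
    (hS : ∀ t, 0 ≤ t → 0 ≤ S t ∧ S t ≤ N t)
    (hI0 : 0 ≤ I 0)
    (hI : ∀ t, 0 ≤ t →
      HasDerivAt I (β * S t * I t / N t - (γ + d + dI) * I t) t) :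
    (∀ t, 0 ≤ t → 0 ≤ I t ∧ I t ≤ I 0 * Real.exp (-(γ + d + dI - β) * t)) ∧
      Tendsto I atTop (nhds 0) := by
  set c := γ + d + dI with hc
  have hc0 : 0 ≤ c := by positivity
  set K := β + c with hK
  -- ratio bound
  have hratio : ∀ t, 0 ≤ t → 0 ≤ β * S t / N t ∧ β * S t / N t ≤ β := by
    intro t ht
    constructor
    · exact div_nonneg (mul_nonneg hβ (hS t ht).1) (hN t ht).le
    · rw [div_le_iff₀ (hN t ht)]
      nlinarith [(hS t ht).2, hN t ht]
  have hrw : ∀ t, β * S t * I t / N t - c * I t = (β * S t / N t - c) * I t := by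
    intro t; rw [sub_mul, div_mul_eq_mul_div]
  have hbound : ∀ t, 0 ≤ t → ‖β * S t * I t / N t - c * I t‖ ≤ K * ‖I t‖ := by
    intro t ht
    rw [hrw, norm_mul]
    gcongr
    rw [Real.norm_eq_abs, abs_le]
    constructor
    · nlinarith [(hratio t ht).1]
    · nlinarith [(hratio t ht).2]
  have hcont : ∀ t, 0 ≤ t → ContinuousAt I t := fun t ht => (hI t ht).continuousAt
  -- if I vanishes at t1 ≥ 0 then I 0 = 0 (time reversal Gronwall)
  have hback : ∀ t1, 0 ≤ t1 → I t1 = 0 → I 0 = 0 := by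
    intro t1 ht1 hz
    set J : ℝ → ℝ := fun s => I (t1 - s) with hJ
    have hder : ∀ s ∈ Ico (0:ℝ) t1,
        HasDerivWithinAt J (-(β * S (t1-s) * I (t1-s) / N (t1-s) - c * I (t1-s))) (Ici s) s := by
      intro s hs
      have h1 : 0 ≤ t1 - s := by linarith [hs.2.le]
      have := ((hI (t1 - s) h1).comp s (((hasDerivAt_id s).const_sub t1)))
      exact this.hasDerivWithinAt.congr_deriv (by ring)
    have hJc : ContinuousOn J (Icc 0 t1) := by
      intro s hs
      have h1 : 0 ≤ t1 - s := by linarith [hs.2]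
      exact ((hcont (t1 - s) h1).comp ((continuous_const.sub continuous_id).continuousAt)).continuousWithinAt
    have := norm_le_gronwallBound_of_norm_deriv_right_le (δ := 0) (K := K) (ε := 0) hJc hder
      (by simp [hJ, hz]) (fun s hs => by
        have h1 : 0 ≤ t1 - s := by linarith [hs.2.le]
        simp only [norm_neg, add_zero]
        exact hbound (t1 - s) h1)
      t1 (right_mem_Icc.2 ht1)
    simpa [hJ, gronwallBound_ε0_δ0] using this
  -- if I 0 = 0 then I t = 0 for all t ≥ 0
  have hfwd : I 0 = 0 → ∀ t, 0 ≤ t → I t = 0 := by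
    intro h0 t ht
    have hder : ∀ s ∈ Ico (0:ℝ) t,
        HasDerivWithinAt I (β * S s * I s / N s - c * I s) (Ici s) s :=
      fun s hs => (hI s hs.1).hasDerivWithinAt
    have := norm_le_gronwallBound_of_norm_deriv_right_le (δ := 0) (K := K) (ε := 0)
      (fun s hs => (hcont s hs.1).continuousWithinAt) hder (by simp [h0])
      (fun s hs => by simp only [add_zero]; exact hbound s hs.1)
      t (right_mem_Icc.2 ht)
    simpa [gronwallBound_ε0_δ0] using this
  -- nonnegativity
  have hpos : ∀ t, 0 ≤ t → 0 ≤ I t := by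
    intro t ht
    by_contra hneg
    push_neg at hneg
    rcases eq_or_lt_of_le hI0 with h0 | h0
    · exact absurd (hfwd h0.symm t ht) (by linarith)
    · have : ∃ t1 ∈ Icc 0 t, I t1 = 0 := by
        have hIc : ContinuousOn I (Icc 0 t) := fun s hs => (hcont s hs.1).continuousWithinAt
        have := intermediate_value_Icc' ht hIc (by constructor <;> linarith : (0:ℝ) ∈ Icc (I t) (I 0))
        obtain ⟨t1, ht1, h⟩ := this
        exact ⟨t1, ht1, h⟩
      obtain ⟨t1, ht1, hz⟩ := this
      have := hback t1 ht1.1 hz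
      linarith
  have hmain : ∀ t, 0 ≤ t → 0 ≤ I t ∧ I t ≤ I 0 * Real.exp (-(c - β) * t) := by
    intro t ht
    refine ⟨hpos t ht, ?_⟩
    set f : ℝ → ℝ := fun t => I t * Real.exp ((c - β) * t) with hf
    have hfd : ∀ s, 0 ≤ s → HasDerivAt f
        (Real.exp ((c - β) * s) * (β * S s * I s / N s - β * I s)) s := by
      intro s hs
      have he : HasDerivAt (fun u => Real.exp ((c - β) * u)) ((c - β) * Real.exp ((c - β) * s)) s := by
        simpa [mul_comm] using (HasDerivAt.exp ((hasDerivAt_id s).const_mul (c - β)))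
      have := (hI s hs).mul he
      exact this.congr_deriv (by ring)
    have hanti : AntitoneOn f (Ici 0) := by
      apply antitoneOn_of_deriv_nonpos (convex_Ici 0)
      · exact fun s hs => ((hfd s hs).continuousAt).continuousWithinAt
      · intro s hs
        rw [interior_Ici] at hs
        exact (hfd s hs.le).differentiableAt.differentiableWithinAt
      · intro s hs
        rw [interior_Ici] at hs
        rw [(hfd s hs.le).deriv]
        have h1 : β * S s * I s / N s ≤ β * I s := by
          rw [div_le_iff₀ (hN s hs.le)]
          nlinarith [mul_nonneg (mul_nonneg hβ (hpos s hs.le)) (sub_nonneg.2 (hS s hs.le).2),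
            hN s hs.le, hpos s hs.le]
        have := Real.exp_pos ((c - β) * s)
        nlinarith
    have hle : f t ≤ f 0 := hanti (Set.mem_Ici.2 le_rfl) ht ht
    have : I t * Real.exp ((c - β) * t) ≤ I 0 := by simpa [hf] using hle
    rw [neg_mul, Real.exp_neg, ← div_eq_mul_inv, le_div_iff₀ (Real.exp_pos _)]
    linarith
  refine ⟨hmain, ?_⟩
  · -- tendsto
    have h1 : Tendsto (fun t => I 0 * Real.exp (-(c - β) * t)) atTop (nhds 0) := by
      have : Tendsto (fun t : ℝ => -(c - β) * t) atTop atBot :=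
        tendsto_id.const_mul_atTop_of_neg (by linarith)
      simpa using (Real.tendsto_exp_atBot.comp this).const_mul (I 0)
    refine tendsto_of_tendsto_of_tendsto_of_le_of_le' tendsto_const_nhds h1 ?_ ?_
    · filter_upwards [eventually_ge_atTop 0] with t ht using hpos t ht
    · filter_upwards [eventually_ge_atTop 0] with t ht using (hmain t ht).2
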